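/- For any real constants a, b, c, d, the function M(u) = a·u + b·(u^2+u^4) + c·u^3 + d·(u^4+u^2)·F(u), where F(u) = ∫_0^{1/sqrt(1+u^2)} sqrt(1-t^2) dt, has at most 3 zeros (with multiplicity) in (0,∞), since d/du [M(u)/(u^2+u^4)] = -(2/(u+u^3)^2)·(A u^4 + B u^2 + C) for suitable constants A, B, C depending linearly on a, b, c, d. -/

import Mathlib

open Real intervalIntegral Set

lemma no_four_chain_imp {S : Set ℝ}
    (h : ∀ x1 x2 x3 x4 : ℝ, x1 ∈ S → x2 ∈ S → x3 ∈ S → x4 ∈ S →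
      x1 < x2 → x2 < x3 → x3 < x4 → False) :
    S.Finite ∧ S.ncard ≤ 3 := by
  have key : ∀ T : Finset ℝ, ↑T ⊆ S → T.card ≤ 3 := by
    intro T hT
    by_contra hc
    push_neg at hc
    obtain ⟨U, hUT, hU4⟩ := Finset.exists_subset_card_eq hc
    set e := U.orderEmbOfFin hU4 with he
    have hmem : ∀ i : Fin 4, e i ∈ S := fun i =>
      hT (hUT (U.orderEmbOfFin_mem hU4 i))
    have hlt : ∀ i j : Fin 4, i < j → e i < e j := fun i j hij =>
      e.strictMono hij
    exact h (e 0) (e 1) (e 2) (e 3) (hmem 0) (hmem 1) (hmem 2) (hmem 3)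
      (hlt 0 1 (by decide)) (hlt 1 2 (by decide)) (hlt 2 3 (by decide))
  have hfin : S.Finite := by
    by_contra hinf
    obtain ⟨T, hTS, hT4⟩ := Set.Infinite.exists_subset_card_eq hinf 4
    have := key T hTS
    omega
  refine ⟨hfin, ?_⟩
  have := key hfin.toFinset (by simp)
  rwa [Set.ncard_eq_toFinset_card S hfin]

lemma hasDerivAt_F_aux (u : ℝ) (hu : 0 < u) :
    HasDerivAt (fun v : ℝ => ∫ t in (0:ℝ)..(1 / Real.sqrt (1 + v ^ 2)),
      Real.sqrt (1 - t ^ 2)) (-(u ^ 2) / (1 + u ^ 2) ^ 2) u := by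
  have h1u : (0:ℝ) < 1 + u ^ 2 := by positivity
  have hs : (0:ℝ) < Real.sqrt (1 + u ^ 2) := Real.sqrt_pos.2 h1u
  have hsq : Real.sqrt (1 + u ^ 2) ^ 2 = 1 + u ^ 2 := Real.sq_sqrt h1u.le
  have hinner : HasDerivAt (fun v : ℝ => Real.sqrt (1 + v ^ 2))
      (2 * u / (2 * Real.sqrt (1 + u ^ 2))) u := by
    have h2 : HasDerivAt (fun v : ℝ => 1 + v ^ 2) (2 * u) u := by
      simpa using ((hasDerivAt_pow 2 u).const_add 1)
    have := (Real.hasDerivAt_sqrt h1u.ne').comp u h2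
    exact this.congr_deriv (by ring)
  have hφ : HasDerivAt (fun v : ℝ => 1 / Real.sqrt (1 + v ^ 2))
      (-(2 * u / (2 * Real.sqrt (1 + u ^ 2))) / (Real.sqrt (1 + u ^ 2)) ^ 2) u := by
    simpa [one_div, Pi.inv_def] using hinner.inv hs.ne'
  set x := 1 / Real.sqrt (1 + u ^ 2) with hx
  have hcont : Continuous fun t : ℝ => Real.sqrt (1 - t ^ 2) :=
    Real.continuous_sqrt.comp (by continuity)
  have hg : ∀ y : ℝ, HasDerivAt (fun z : ℝ => ∫ t in (0:ℝ)..z, Real.sqrt (1 - t ^ 2))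
      (Real.sqrt (1 - y ^ 2)) y := fun y =>
    intervalIntegral.integral_hasDerivAt_right
      (hcont.intervalIntegrable 0 y)
      (hcont.stronglyMeasurableAtFilter _ _)
      hcont.continuousAt
  have hcomp := (hg x).comp u hφ
  refine hcomp.congr_deriv ?_
  have hx2 : 1 - x ^ 2 = u ^ 2 / (1 + u ^ 2) := by
    rw [hx]; field_simp [hsq]; rw [hsq]; ring
  have hxs : Real.sqrt (1 - x ^ 2) = u / Real.sqrt (1 + u ^ 2) := by
    rw [hx2, Real.sqrt_div (sq_nonneg u), Real.sqrt_sq hu.le]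
  rw [hxs]
  field_simp
  linear_combination (2*u^2*(1+u^2) + Real.sqrt (1 + u ^ 2) ^ 2 + 1 - u^2 - 2*u^4) * hsq

theorem stmt_18
    (F : ℝ → ℝ)
    (hF : ∀ u, F u = ∫ t in (0:ℝ)..(1 / Real.sqrt (1 + u ^ 2)),
      Real.sqrt (1 - t ^ 2))
    (a b c d : ℝ) (habcd : ¬ (a = 0 ∧ b = 0 ∧ c = 0 ∧ d = 0))
    (M : ℝ → ℝ)
    (hM : ∀ u, M u = a * u + b * (u ^ 2 + u ^ 4) + c * u ^ 3 +
      d * (u ^ 4 + u ^ 2) * F u) :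
    {u : ℝ | u ∈ Set.Ioi (0:ℝ) ∧ M u = 0}.Finite ∧
    {u : ℝ | u ∈ Set.Ioi (0:ℝ) ∧ M u = 0}.ncard ≤ 3 := by
  have hFfun : F = fun u : ℝ => ∫ t in (0:ℝ)..(1 / Real.sqrt (1 + u ^ 2)),
      Real.sqrt (1 - t ^ 2) := funext hF
  subst hFfun
  set G : ℝ → ℝ := fun u => a / (u + u ^ 3) + b + c * u / (1 + u ^ 2) +
      d * (∫ t in (0:ℝ)..(1 / Real.sqrt (1 + u ^ 2)), Real.sqrt (1 - t ^ 2)) with hG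
  -- G has the nice derivative
  have hG' : ∀ u : ℝ, 0 < u → HasDerivAt G
      ((-a * (1 + 3 * u ^ 2) + c * u ^ 2 * (1 - u ^ 2) - d * u ^ 4) /
        (u ^ 2 * (1 + u ^ 2) ^ 2)) u := by
    intro u hu
    have hden1 : u + u ^ 3 ≠ 0 := by positivity
    have hden2 : (1 : ℝ) + u ^ 2 ≠ 0 := by positivity
    have h1 : HasDerivAt (fun v : ℝ => v + v ^ 3) (1 + 3 * u ^ 2) u := by
      exact ((hasDerivAt_id u).add (hasDerivAt_pow 3 u)).congr_deriv (by norm_num)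
    have h2 : HasDerivAt (fun v : ℝ => 1 + v ^ 2) (2 * u) u := by
      simpa using ((hasDerivAt_pow 2 u).const_add 1)
    have hA : HasDerivAt (fun v : ℝ => a / (v + v ^ 3))
        ((0 * (u + u ^ 3) - a * (1 + 3 * u ^ 2)) / (u + u ^ 3) ^ 2) u :=
      (hasDerivAt_const u a).div h1 hden1
    have hC : HasDerivAt (fun v : ℝ => c * v / (1 + v ^ 2))
        ((c * (1 + u ^ 2) - c * u * (2 * u)) / (1 + u ^ 2) ^ 2) u := by
      have := ((hasDerivAt_id u).const_mul c).fun_div h2 hden2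
      simpa using this
    have hD := (hasDerivAt_F_aux u hu).const_mul d
    have := ((hA.add_const b).add hC).add hD
    refine this.congr_deriv ?_
    field_simp
    ring
  -- relation between M and G on (0,∞)
  have hGzero : ∀ u : ℝ, 0 < u → M u = 0 → G u = 0 := by
    intro u hu hMu
    have hden1 : u + u ^ 3 ≠ 0 := by positivity
    have hden2 : (1 : ℝ) + u ^ 2 ≠ 0 := by positivity
    have hrel : (u ^ 2 + u ^ 4) * G u = M u := by
      rw [hM, hG]
      field_simp
      ring
    have hpos : (0:ℝ) < u ^ 2 + u ^ 4 := by positivity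
    have : (u ^ 2 + u ^ 4) * G u = 0 := by rw [hrel, hMu]
    rcases mul_eq_zero.1 this with h | h
    · exact absurd h hpos.ne'
    · exact h
  apply no_four_chain_imp
  intro x1 x2 x3 x4 h1 h2 h3 h4 h12 h23 h34
  simp only [Set.mem_setOf_eq, Set.mem_Ioi] at h1 h2 h3 h4
  obtain ⟨hx1, hM1⟩ := h1
  obtain ⟨hx2, hM2⟩ := h2
  obtain ⟨hx3, hM3⟩ := h3
  obtain ⟨hx4, hM4⟩ := h4
  -- Rolle between consecutive zeros
  have rolle : ∀ p q : ℝ, 0 < p → p < q → G p = 0 → G q = 0 →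
      ∃ r : ℝ, p < r ∧ r < q ∧
        -a + (c - 3 * a) * r ^ 2 - (c + d) * (r ^ 2) ^ 2 = 0 := by
    intro p q hp hpq hGp hGq
    have hcont : ContinuousOn G (Set.Icc p q) := fun x hx =>
      ((hG' x (lt_of_lt_of_le hp hx.1)).differentiableAt.continuousAt).continuousWithinAt
    obtain ⟨r, hr, hr0⟩ := exists_hasDerivAt_eq_zero hpq hcont (hGp.trans hGq.symm)
      (fun x hx => hG' x (hp.trans hx.1))
    have hrpos : 0 < r := hp.trans hr.1
    have hden : r ^ 2 * (1 + r ^ 2) ^ 2 ≠ 0 := by positivity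
    have hnum : -a * (1 + 3 * r ^ 2) + c * r ^ 2 * (1 - r ^ 2) - d * r ^ 4 = 0 := by
      rcases div_eq_zero_iff.1 hr0 with h | h
      · exact h
      · exact absurd h hden
    exact ⟨r, hr.1, hr.2, by linear_combination hnum⟩
  obtain ⟨r1, hr11, hr12, e1⟩ := rolle x1 x2 hx1 h12 (hGzero x1 hx1 hM1) (hGzero x2 hx2 hM2)
  obtain ⟨r2, hr21, hr22, e2⟩ := rolle x2 x3 hx2 h23 (hGzero x2 hx2 hM2) (hGzero x3 hx3 hM3)
  obtain ⟨r3, hr31, hr32, e3⟩ := rolle x3 x4 hx3 h34 (hGzero x3 hx3 hM3) (hGzero x4 hx4 hM4)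
  have hr1p : 0 < r1 := hx1.trans hr11
  have hr2p : 0 < r2 := hx2.trans hr21
  have hr3p : 0 < r3 := hx3.trans hr31
  set v1 := r1 ^ 2
  set v2 := r2 ^ 2
  set v3 := r3 ^ 2
  have hv12 : v1 < v2 :=
    pow_lt_pow_left₀ (hr12.trans hr21) hr1p.le (by norm_num)
  have hv23 : v2 < v3 :=
    pow_lt_pow_left₀ (hr22.trans hr31) hr2p.le (by norm_num)
  -- quadratic with three distinct roots is zero
  have key12 : ((c - 3 * a) - (c + d) * (v1 + v2)) * (v1 - v2) = 0 := by
    linear_combination e1 - e2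
  have key23 : ((c - 3 * a) - (c + d) * (v2 + v3)) * (v2 - v3) = 0 := by
    linear_combination e2 - e3
  have h12' : (c - 3 * a) = (c + d) * (v1 + v2) := by
    rcases mul_eq_zero.1 key12 with h | h
    · linarith
    · exact absurd h (by linarith)
  have h23' : (c - 3 * a) = (c + d) * (v2 + v3) := by
    rcases mul_eq_zero.1 key23 with h | h
    · linarith
    · exact absurd h (by linarith)
  have hcd : c + d = 0 := by
    have : (c + d) * (v3 - v1) = 0 := by linear_combination h12' - h23'
    rcases mul_eq_zero.1 this with h | h
    · exact h
    · exact absurd h (by linarith)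
  have hc3a : c - 3 * a = 0 := by rw [h12', hcd]; ring
  have ha : a = 0 := by
    have := e1
    rw [hcd, hc3a] at this
    linarith [this]
  have hc : c = 0 := by linarith
  have hd : d = 0 := by linarith
  have hb : b ≠ 0 := by
    intro hb
    exact habcd ⟨ha, hb, hc, hd⟩
  have := hM x1
  rw [hM1, ha, hc, hd] at this
  have hpos : (0:ℝ) < x1 ^ 2 + x1 ^ 4 := by positivity
  have : b * (x1 ^ 2 + x1 ^ 4) = 0 := by linarith
  rcases mul_eq_zero.1 this with h | h
  · exact hb h
  · exact absurd h hpos.ne'
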